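/- Let f : ℝⁿ → ℝⁿ be Lipschitz with f(0) = 0, let D ⊆ ℝⁿ be an open set containing 0, and let V : ℝⁿ → ℝ be continuously differentiable with V(0) = 0, V(z) > 0 for all z ∈ D \ {0}, and ⟨∇V(z), f(z)⟩ ≤ 0 for all z ∈ D. Then the origin is a stable equilibrium of ż = f(z): for every ε > 0 with the closed ball of radius ε contained in D, there exists δ > 0 such that every differentiable curve z : [0,∞) → ℝⁿ satisfying z'(t) = f(z(t)) for all t ≥ 0 and ‖z(0)‖ < δ satisfies ‖z(t)‖ < ε for all t ≥ 0. -/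

import Mathlib

/-- **Lyapunov stability.** If `f : ℝⁿ → ℝⁿ` is Lipschitz with `f 0 = 0`, `D` is an open set
containing the origin, and `V` is a continuously differentiable function with `V 0 = 0`,
`V z > 0` on `D \ {0}` and `⟪∇V z, f z⟫ ≤ 0` on `D`, then the origin is a stable equilibrium
of `ż = f z`. -/
theorem stmt_0 {n : ℕ}
    (f : EuclideanSpace ℝ (Fin n) → EuclideanSpace ℝ (Fin n))
    (K : NNReal) (hf : LipschitzWith K f) (hf0 : f 0 = 0)
    (D : Set (EuclideanSpace ℝ (Fin n))) (hD : IsOpen D)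
    (h0D : (0 : EuclideanSpace ℝ (Fin n)) ∈ D)
    (V : EuclideanSpace ℝ (Fin n) → ℝ) (hV : ContDiff ℝ 1 V)
    (hV0 : V 0 = 0)
    (hVpos : ∀ z ∈ D, z ≠ 0 → 0 < V z)
    (hVdot : ∀ z ∈ D, (inner ℝ (gradient V z) (f z) : ℝ) ≤ 0) :
    ∀ ε > 0, Metric.closedBall (0 : EuclideanSpace ℝ (Fin n)) ε ⊆ D →
      ∃ δ > 0, ∀ z : ℝ → EuclideanSpace ℝ (Fin n),
        (∀ t, 0 ≤ t → HasDerivAt z (f (z t)) t) →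
        ‖z 0‖ < δ → ∀ t, 0 ≤ t → ‖z t‖ < ε := by
  intro ε hε hεD
  rcases subsingleton_or_nontrivial (EuclideanSpace ℝ (Fin n)) with hsub | hnt
  · refine ⟨ε, hε, fun z _ _ t _ => ?_⟩
    have : z t = 0 := Subsingleton.elim _ _
    rw [this, norm_zero]; exact hε
  -- minimum of V on the sphere of radius ε
  have hsc : IsCompact (Metric.sphere (0 : EuclideanSpace ℝ (Fin n)) ε) :=
    isCompact_sphere 0 ε
  have hsne : (Metric.sphere (0 : EuclideanSpace ℝ (Fin n)) ε).Nonempty :=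
    NormedSpace.sphere_nonempty.mpr hε.le
  obtain ⟨x₀, hx₀s, hx₀min⟩ := hsc.exists_isMinOn hsne hV.continuous.continuousOn
  set m := V x₀ with hm
  have hx₀D : x₀ ∈ D := hεD (Metric.sphere_subset_closedBall hx₀s)
  have hx₀ne : x₀ ≠ 0 := by
    intro h
    have := Metric.mem_sphere.mp hx₀s
    rw [h, dist_self] at this
    exact hε.ne this
  have hmpos : 0 < m := hVpos x₀ hx₀D hx₀ne
  -- continuity of V at 0
  have hVc : ContinuousAt V 0 := hV.continuous.continuousAt
  rw [Metric.continuousAt_iff] at hVc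
  obtain ⟨δ₁, hδ₁, hδ₁V⟩ := hVc m hmpos
  refine ⟨min δ₁ ε, lt_min hδ₁ hε, fun z hz hz0 t ht => ?_⟩
  have hz0ε : ‖z 0‖ < ε := lt_of_lt_of_le hz0 (min_le_right _ _)
  have hz0m : V (z 0) < m := by
    have := hδ₁V (show dist (z 0) 0 < δ₁ by
      rw [dist_zero_right]; exact lt_of_lt_of_le hz0 (min_le_left _ _))
    rw [hV0, dist_zero_right] at this
    calc V (z 0) ≤ ‖V (z 0)‖ := le_abs_self _
    _ < m := this
  by_contra hcon
  push_neg at hcon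
  -- the set of bad times
  set S : Set ℝ := {t | 0 ≤ t ∧ ε ≤ ‖z t‖} with hS
  have hSne : S.Nonempty := ⟨t, ht, hcon⟩
  have hSbdd : BddBelow S := ⟨0, fun s hs => hs.1⟩
  set t₀ := sInf S with ht₀
  have ht₀0 : 0 ≤ t₀ := le_csInf hSne fun s hs => hs.1
  have hcont : ∀ s, 0 ≤ s → ContinuousAt z s := fun s hs => (hz s hs).continuousAt
  -- times before t₀ are good
  have hbefore : ∀ s, 0 ≤ s → s < t₀ → ‖z s‖ < ε := by
    intro s hs hst
    by_contra h
    push_neg at h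
    exact absurd (csInf_le hSbdd ⟨hs, h⟩) (not_le.mpr hst)
  -- ε ≤ ‖z t₀‖
  have ht₀S : ε ≤ ‖z t₀‖ := by
    by_contra h
    push_neg at h
    have hc : ContinuousAt (fun s => ‖z s‖) t₀ := (hcont t₀ ht₀0).norm
    rw [Metric.continuousAt_iff] at hc
    obtain ⟨η, hη, hηz⟩ := hc (ε - ‖z t₀‖) (by linarith)
    obtain ⟨s, hsS, hslt⟩ := (csInf_lt_iff hSbdd hSne).mp
      (show sInf S < t₀ + η by rw [← ht₀]; linarith)
    have hds : dist s t₀ < η := by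
      rw [Real.dist_eq, abs_lt]
      constructor
      · have := csInf_le hSbdd hsS; rw [← ht₀] at this; linarith
      · linarith
    have := hηz hds
    rw [Real.dist_eq] at this
    have hzs : ‖z s‖ < ε := by
      rcases abs_lt.mp this with ⟨h1, _⟩
      linarith
    exact absurd hsS.2 (not_le.mpr hzs)
  have ht₀pos : 0 < t₀ := by
    rcases lt_or_eq_of_le ht₀0 with h | h
    · exact h
    · exfalso; rw [← h] at ht₀S; linarith
  -- ‖z t₀‖ ≤ ε, as a limit of values < ε
  have ht₀le : ‖z t₀‖ ≤ ε := by
    have htend : Filter.Tendsto (fun s => ‖z s‖) (nhdsWithin t₀ (Set.Iio t₀))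
        (nhds ‖z t₀‖) :=
      ((hcont t₀ ht₀0).norm).continuousWithinAt
    refine le_of_tendsto htend ?_
    have hmem : Set.Ioo 0 t₀ ∈ nhdsWithin t₀ (Set.Iio t₀) :=
      Ioo_mem_nhdsLT_of_mem ⟨ht₀pos, le_rfl⟩
    filter_upwards [hmem] with s hs
    exact (hbefore s hs.1.le hs.2).le
  have ht₀eq : ‖z t₀‖ = ε := le_antisymm ht₀le ht₀S
  -- on [0, t₀], z stays in the closed ball, hence in D
  have hinD : ∀ s ∈ Set.Icc (0:ℝ) t₀, z s ∈ D := by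
    intro s hs
    apply hεD
    rw [Metric.mem_closedBall, dist_zero_right]
    rcases lt_or_eq_of_le hs.2 with h | h
    · exact (hbefore s hs.1 h).le
    · rw [h, ht₀eq]
  -- V ∘ z is differentiable with nonpositive derivative
  have hVd : ∀ s ∈ Set.Icc (0:ℝ) t₀,
      HasDerivAt (fun u => V (z u)) ((inner ℝ (gradient V (z s)) (f (z s)) : ℝ)) s := by
    intro s hs
    have h1 : DifferentiableAt ℝ V (z s) := hV.differentiable one_ne_zero |>.differentiableAt
    have h2 := h1.hasGradientAt.hasFDerivAt
    have h3 := h2.comp_hasDerivAt s (hz s hs.1)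
    have : (InnerProductSpace.toDual ℝ (EuclideanSpace ℝ (Fin n)) (gradient V (z s)))
        (f (z s)) = (inner ℝ (gradient V (z s)) (f (z s)) : ℝ) := by
      simp [InnerProductSpace.toDual_apply_apply]
    rwa [this] at h3
  have hanti : AntitoneOn (fun u => V (z u)) (Set.Icc 0 t₀) := by
    apply antitoneOn_of_deriv_nonpos (convex_Icc 0 t₀)
    · intro s hs
      exact (hVd s hs).continuousAt.continuousWithinAt
    · intro s hs
      rw [interior_Icc] at hs
      exact (hVd s ⟨hs.1.le, hs.2.le⟩).differentiableAt.differentiableWithinAt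
    · intro s hs
      rw [interior_Icc] at hs
      rw [(hVd s ⟨hs.1.le, hs.2.le⟩).deriv]
      exact hVdot (z s) (hinD s ⟨hs.1.le, hs.2.le⟩)
  have hVle : V (z t₀) ≤ V (z 0) :=
    hanti (Set.left_mem_Icc.mpr ht₀0) (Set.right_mem_Icc.mpr ht₀0) ht₀0
  have hmin : m ≤ V (z t₀) := by
    apply hx₀min
    rw [Metric.mem_sphere, dist_zero_right, ht₀eq]
  linarith
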